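/- Let T, V be bounded linear invertible operators on a complex Hilbert space H with 0 < m < M and m‖Tx‖ ≤ ‖Vx‖ ≤ M‖Tx‖ for all x ∈ H. Then for every ν ∈ (0,1), in the operator order: T Ⓢ_ν V ≤ 2·((M^{2(ν+1)} − m^{2(ν+1)})/((ν+1)(M² − m²)))·|T|² − (M²−m²)⁻¹·[M^{2ν}(M²|T|² − |V|²) + m^{2ν}(|V|² − m²|T|²)]. -/

import Mathlib

variable {H : Type*} [NormedAddCommGroup H] [InnerProductSpace ℂ H] [CompleteSpace H]

/-- `X = |VT⁻¹|² = (T*)⁻¹ V* V T⁻¹`. -/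
noncomputable def qX (V T : (H →L[ℂ] H)ˣ) : H →L[ℂ] H :=
  star (↑(T⁻¹) : H →L[ℂ] H) * (star (V : H →L[ℂ] H) * (V : H →L[ℂ] H)) * (↑(T⁻¹) : H →L[ℂ] H)

/-- The quadratic operator perspective `⊙_Φ(V,T) = T* Φ(X) T`. -/
noncomputable def qPersp (Φ : ℝ → ℝ) (V T : (H →L[ℂ] H)ˣ) : H →L[ℂ] H :=
  star (T : H →L[ℂ] H) * cfc Φ (qX V T) * (T : H →L[ℂ] H)

/-- `|T|² = T*T`. -/
noncomputable def modSq (T : (H →L[ℂ] H)ˣ) : H →L[ℂ] H :=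
  star (T : H →L[ℂ] H) * (T : H →L[ℂ] H)

open intervalIntegral Set

lemma key_scalar {a b ν : ℝ} (ha : 0 < a) (hab : a < b) (hν0 : 0 < ν) (hν1 : ν < 1)
    {s : ℝ} (hsa : a ≤ s) (hsb : s ≤ b) :
    s ^ ν ≤ 2 * ((b ^ (ν + 1) - a ^ (ν + 1)) / ((ν + 1) * (b - a))) -
      (b - a)⁻¹ * (b ^ ν * (b - s) + a ^ ν * (s - a)) := by
  have hba : (0:ℝ) < b - a := by linarith
  have hba' : b - a ≠ 0 := ne_of_gt hba
  set k : ℝ := (b ^ ν - a ^ ν) / (b - a) with hk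
  set c : ℝ → ℝ := fun t => a ^ ν + (t - a) * k with hc
  set gap : ℝ → ℝ := fun t => t ^ ν - c t with hgap
  have hconc : ConcaveOn ℝ (Set.Ici 0) (fun t : ℝ => t ^ ν) :=
    Real.concaveOn_rpow hν0.le hν1.le
  have hcconv : ConvexOn ℝ (Set.Ici 0) c := by
    refine ⟨convex_Ici 0, fun x _ y _ p q hp hq hpq => le_of_eq ?_⟩
    simp only [hc, smul_eq_mul]
    linear_combination (a ^ ν - a * k) * hpq.symm
  have hgapconc : ConcaveOn ℝ (Set.Icc a b) gap :=
    (hconc.sub hcconv).subset (fun x hx => le_trans ha.le hx.1) (convex_Icc a b)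
  have hga : gap a = 0 := by simp [hgap, hc]
  have hgb : gap b = 0 := by
    simp only [hgap, hc, hk]
    field_simp
    ring
  have gap_nonneg : ∀ t ∈ Icc a b, 0 ≤ gap t := by
    intro t ht
    have h1 : (0:ℝ) ≤ (b - t)/(b - a) := div_nonneg (by linarith [ht.2]) hba.le
    have h2 : (0:ℝ) ≤ (t - a)/(b - a) := div_nonneg (by linarith [ht.1]) hba.le
    have h3 : (b - t)/(b - a) + (t - a)/(b - a) = 1 := by field_simp; ring
    have h4 := hgapconc.2 (left_mem_Icc.mpr hab.le) (right_mem_Icc.mpr hab.le) h1 h2 h3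
    rw [hga, hgb] at h4
    simp only [smul_eq_mul, mul_zero, add_zero] at h4
    have ht' : (b - t)/(b - a) * a + (t - a)/(b - a) * b = t := by
      rw [div_mul_eq_mul_div, div_mul_eq_mul_div, ← add_div, div_eq_iff hba']; ring
    rwa [ht'] at h4
  have hcont : ∀ u v : ℝ, IntervalIntegrable gap MeasureTheory.volume u v := by
    intro u v
    apply ContinuousOn.intervalIntegrable
    intro t _
    refine ContinuousWithinAt.sub ?_ ?_
    · exact (Real.continuousAt_rpow_const t ν (Or.inr hν0.le)).continuousWithinAt
    · exact ((continuous_const.add ((continuous_id.sub continuous_const).mul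
        continuous_const))).continuousWithinAt
  have hlinval : ∀ u v : ℝ, (∫ t in u..v, (t - u)) = (v - u)^2/2 := by
    intro u v
    rw [intervalIntegral.integral_sub intervalIntegral.intervalIntegrable_id
      intervalIntegrable_const]
    simp [integral_id]
    ring
  have key : gap s * (b - a) / 2 ≤ ∫ t in a..b, gap t := by
    rcases eq_or_lt_of_le hsa with rfl | hsa'
    · rw [hga]
      simpa using intervalIntegral.integral_nonneg hab.le gap_nonneg
    rcases eq_or_lt_of_le hsb with rfl | hsb'
    · rw [hgb]
      simpa using intervalIntegral.integral_nonneg hab.le gap_nonneg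
    have hsa0 : s - a ≠ 0 := by intro h; nlinarith
    have hbs0 : b - s ≠ 0 := by intro h; nlinarith
    have hI1 : gap s * (s - a) / 2 ≤ ∫ t in a..s, gap t := by
      have hpt : ∀ t ∈ Icc a s, (t - a)/(s - a) * gap s ≤ gap t := by
        intro t ht
        have h1 : (0:ℝ) ≤ (s - t)/(s - a) := div_nonneg (by linarith [ht.2]) (by linarith)
        have h2 : (0:ℝ) ≤ (t - a)/(s - a) := div_nonneg (by linarith [ht.1]) (by linarith)
        have h3 : (s - t)/(s - a) + (t - a)/(s - a) = 1 := by field_simp; ring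
        have h4 := hgapconc.2 (left_mem_Icc.mpr hab.le) (Set.mem_Icc.mpr ⟨hsa, hsb⟩) h1 h2 h3
        rw [hga] at h4
        simp only [smul_eq_mul, mul_zero, zero_add] at h4
        have ht' : (s - t)/(s - a) * a + (t - a)/(s - a) * s = t := by
          rw [div_mul_eq_mul_div, div_mul_eq_mul_div, ← add_div, div_eq_iff hsa0]; ring
        rwa [ht'] at h4
      have hmono := intervalIntegral.integral_mono_on hsa
        (by
          apply ContinuousOn.intervalIntegrable
          exact (((continuous_id.sub continuous_const).div_const _).mul
            continuous_const).continuousOn)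
        (hcont a s) hpt
      have hval : (∫ t in a..s, (t - a)/(s - a) * gap s) = gap s * (s - a) / 2 := by
        have e1 : (∫ t in a..s, (t - a)/(s - a) * gap s)
            = (∫ t in a..s, (t - a)) * ((s - a)⁻¹ * gap s) := by
          rw [← intervalIntegral.integral_mul_const]
          congr 1 with t
          ring
        rw [e1, hlinval]
        field_simp
      rw [hval] at hmono
      exact hmono
    have hI2 : gap s * (b - s) / 2 ≤ ∫ t in s..b, gap t := by
      have hpt : ∀ t ∈ Icc s b, (b - t)/(b - s) * gap s ≤ gap t := by
        intro t ht
        have h1 : (0:ℝ) ≤ (b - t)/(b - s) := div_nonneg (by linarith [ht.2]) (by linarith)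
        have h2 : (0:ℝ) ≤ (t - s)/(b - s) := div_nonneg (by linarith [ht.1]) (by linarith)
        have h3 : (b - t)/(b - s) + (t - s)/(b - s) = 1 := by field_simp; ring
        have h4 := hgapconc.2 (Set.mem_Icc.mpr ⟨hsa, hsb⟩) (right_mem_Icc.mpr hab.le) h1 h2 h3
        rw [hgb] at h4
        simp only [smul_eq_mul, mul_zero, add_zero] at h4
        have ht' : (b - t)/(b - s) * s + (t - s)/(b - s) * b = t := by
          rw [div_mul_eq_mul_div, div_mul_eq_mul_div, ← add_div, div_eq_iff hbs0]; ring
        rwa [ht'] at h4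
      have hmono := intervalIntegral.integral_mono_on hsb
        (by
          apply ContinuousOn.intervalIntegrable
          exact (((continuous_const.sub continuous_id).div_const _).mul
            continuous_const).continuousOn)
        (hcont s b) hpt
      have hval : (∫ t in s..b, (b - t)/(b - s) * gap s) = gap s * (b - s) / 2 := by
        have e1 : (∫ t in s..b, (b - t)/(b - s) * gap s)
            = (∫ t in s..b, (t - s)) * (-(b - s)⁻¹ * gap s)
              + (∫ t in s..b, (b - s)⁻¹ * (b - s) * gap s) := by
          rw [← intervalIntegral.integral_mul_const, ← intervalIntegral.integral_add
            (by apply ContinuousOn.intervalIntegrable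
                exact ((continuous_id.sub continuous_const).mul continuous_const).continuousOn)
            (by exact intervalIntegrable_const)]
          congr 1 with t
          ring
        rw [e1, hlinval, intervalIntegral.integral_const]
        field_simp
        ring
      rw [hval] at hmono
      exact hmono
    rw [← intervalIntegral.integral_add_adjacent_intervals (hcont a s) (hcont s b)]
    linarith
  have hν1' : ν + 1 ≠ 0 := by linarith
  have hIrpow : (∫ t in a..b, t ^ ν) = (b ^ (ν + 1) - a ^ (ν + 1)) / (ν + 1) := by
    apply integral_rpow
    exact Or.inl (by linarith)
  have hIc : (∫ t in a..b, c t) = (a ^ ν + b ^ ν) * (b - a) / 2 := by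
    have e1 : (∫ t in a..b, c t) = (∫ t in a..b, (a:ℝ)^ν) + (∫ t in a..b, (t - a)) * k := by
      simp only [hc]
      rw [← intervalIntegral.integral_mul_const, ← intervalIntegral.integral_add
        intervalIntegrable_const
        (by apply ContinuousOn.intervalIntegrable
            exact ((continuous_id.sub continuous_const).mul continuous_const).continuousOn)]
    rw [e1, hlinval, intervalIntegral.integral_const, hk]
    field_simp
    ring
  have hIgap : (∫ t in a..b, gap t)
      = (b ^ (ν + 1) - a ^ (ν + 1)) / (ν + 1) - (a ^ ν + b ^ ν) * (b - a) / 2 := by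
    have : (∫ t in a..b, gap t) = (∫ t in a..b, t ^ ν) - (∫ t in a..b, c t) := by
      simp only [hgap]
      rw [intervalIntegral.integral_sub]
      · apply ContinuousOn.intervalIntegrable
        intro t _
        exact (Real.continuousAt_rpow_const t ν (Or.inr hν0.le)).continuousWithinAt
      · apply ContinuousOn.intervalIntegrable
        exact (continuous_const.add ((continuous_id.sub continuous_const).mul
          continuous_const)).continuousOn
    rw [this, hIrpow, hIc]
  rw [hIgap] at key
  have hfinal : 2 * ((b ^ (ν + 1) - a ^ (ν + 1)) / ((ν + 1) * (b - a))) -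
      (b - a)⁻¹ * (b ^ ν * (b - s) + a ^ ν * (s - a))
      = (2/(b-a)) * ((b ^ (ν + 1) - a ^ (ν + 1)) / (ν + 1) - (a ^ ν + b ^ ν) * (b - a) / 2)
        + c s := by
    simp only [hc, hk]
    field_simp
    ring
  rw [hfinal]
  have hs' : s ^ ν = gap s + c s := by simp [hgap]
  rw [hs']
  have h2ba : (0:ℝ) < 2/(b-a) := by positivity
  have := mul_le_mul_of_nonneg_left key h2ba.le
  have e2 : 2/(b-a) * (gap s * (b - a) / 2) = gap s := by field_simp
  rw [e2] at this
  linarith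

lemma qX_sa (V T : (H →L[ℂ] H)ˣ) : IsSelfAdjoint (qX V T) := by
  simp only [qX, IsSelfAdjoint, star_mul, star_star, mul_assoc]

lemma inner_qX (V T : (H →L[ℂ] H)ˣ) (x : H) :
    (inner ℂ (qX V T x) x : ℂ) = ((‖(V : H →L[ℂ] H) ((↑(T⁻¹) : H →L[ℂ] H) x)‖ ^ 2 : ℝ) : ℂ) := by
  simp only [qX, ContinuousLinearMap.mul_apply, ContinuousLinearMap.star_eq_adjoint,
    ContinuousLinearMap.adjoint_inner_left]
  rw [inner_self_eq_norm_sq_to_K]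
  norm_cast

lemma Tinv_apply (T : (H →L[ℂ] H)ˣ) (x : H) :
    (T : H →L[ℂ] H) ((↑(T⁻¹) : H →L[ℂ] H) x) = x := by
  have h : (T : H →L[ℂ] H) * (↑(T⁻¹) : H →L[ℂ] H) = 1 := by
    rw [← Units.val_mul, mul_inv_cancel, Units.val_one]
  calc (T : H →L[ℂ] H) ((↑(T⁻¹) : H →L[ℂ] H) x)
      = ((T : H →L[ℂ] H) * (↑(T⁻¹) : H →L[ℂ] H)) x := rfl
    _ = x := by rw [h]; rfl

lemma qX_bounds (T V : (H →L[ℂ] H)ˣ) (m M : ℝ)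
    (hTV : ∀ x : H, m * ‖(T : H →L[ℂ] H) x‖ ≤ ‖(V : H →L[ℂ] H) x‖ ∧
      ‖(V : H →L[ℂ] H) x‖ ≤ M * ‖(T : H →L[ℂ] H) x‖) (hm : 0 ≤ m) (hM : 0 ≤ M) :
    algebraMap ℝ (H →L[ℂ] H) (m ^ 2) ≤ qX V T ∧
      qX V T ≤ algebraMap ℝ (H →L[ℂ] H) (M ^ 2) := by
  have hkey : ∀ x : H, m ^ 2 * ‖x‖ ^ 2 ≤ ‖(V : H →L[ℂ] H) ((↑(T⁻¹) : H →L[ℂ] H) x)‖ ^ 2 ∧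
      ‖(V : H →L[ℂ] H) ((↑(T⁻¹) : H →L[ℂ] H) x)‖ ^ 2 ≤ M ^ 2 * ‖x‖ ^ 2 := by
    intro x
    obtain ⟨h1, h2⟩ := hTV ((↑(T⁻¹) : H →L[ℂ] H) x)
    rw [Tinv_apply] at h1 h2
    constructor
    · have := mul_self_le_mul_self (by positivity) h1
      nlinarith
    · have := mul_self_le_mul_self (norm_nonneg _) h2
      nlinarith [norm_nonneg ((V : H →L[ℂ] H) ((↑(T⁻¹) : H →L[ℂ] H) x)), norm_nonneg x]
  constructor
  · rw [ContinuousLinearMap.le_def, ContinuousLinearMap.isPositive_def']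
    refine ⟨((qX_sa V T).sub (IsSelfAdjoint.algebraMap _ (by exact rfl))), fun x => ?_⟩
    have hDx : (qX V T - algebraMap ℝ (H →L[ℂ] H) (m ^ 2)) x
        = qX V T x - ((m ^ 2 : ℝ) : ℂ) • x := by
      simp [Algebra.algebraMap_eq_smul_one, ← Complex.coe_smul]
    rw [ContinuousLinearMap.reApplyInnerSelf_apply, hDx, inner_sub_left, inner_qX,
      inner_smul_left, inner_self_eq_norm_sq_to_K]
    simp only [map_sub, RCLike.conj_ofReal, Complex.conj_ofReal, ← RCLike.ofReal_pow,
      ← Complex.ofReal_pow, ← RCLike.ofReal_mul, ← Complex.ofReal_mul, RCLike.ofReal_re,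
      Complex.ofReal_re, RCLike.re_to_complex, Complex.re_ofReal_mul, RCLike.ofReal_re, Complex.coe_algebraMap]
    linarith [(hkey x).1]
  · rw [ContinuousLinearMap.le_def, ContinuousLinearMap.isPositive_def']
    refine ⟨((IsSelfAdjoint.algebraMap _ (by exact rfl)).sub (qX_sa V T)), fun x => ?_⟩
    have hDx : (algebraMap ℝ (H →L[ℂ] H) (M ^ 2) - qX V T) x
        = ((M ^ 2 : ℝ) : ℂ) • x - qX V T x := by
      simp [Algebra.algebraMap_eq_smul_one, ← Complex.coe_smul]
    rw [ContinuousLinearMap.reApplyInnerSelf_apply, hDx, inner_sub_left, inner_qX,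
      inner_smul_left, inner_self_eq_norm_sq_to_K]
    simp only [map_sub, RCLike.conj_ofReal, Complex.conj_ofReal, ← RCLike.ofReal_pow,
      ← Complex.ofReal_pow, ← RCLike.ofReal_mul, ← Complex.ofReal_mul, RCLike.ofReal_re,
      Complex.ofReal_re, RCLike.re_to_complex, Complex.re_ofReal_mul, RCLike.ofReal_re,
      Complex.coe_algebraMap]
    linarith [(hkey x).2]

lemma conj_qX (V T : (H →L[ℂ] H)ˣ) :
    star (T : H →L[ℂ] H) * qX V T * (T : H →L[ℂ] H) = modSq V := by
  have h1 : star (↑T : H →L[ℂ] H) * star (↑(T⁻¹) : H →L[ℂ] H) = 1 := by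
    rw [← star_mul, ← Units.val_mul, inv_mul_cancel, Units.val_one, star_one]
  have h2 : (↑(T⁻¹) : H →L[ℂ] H) * (↑T : H →L[ℂ] H) = 1 := by
    rw [← Units.val_mul, inv_mul_cancel, Units.val_one]
  rw [qX, modSq]
  calc star (↑T : H →L[ℂ] H) * (star (↑(T⁻¹) : H →L[ℂ] H)
        * (star (V : H →L[ℂ] H) * (V : H →L[ℂ] H)) * (↑(T⁻¹) : H →L[ℂ] H)) * (↑T : H →L[ℂ] H)
      = (star (↑T : H →L[ℂ] H) * star (↑(T⁻¹) : H →L[ℂ] H))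
        * (star (V : H →L[ℂ] H) * (V : H →L[ℂ] H))
        * ((↑(T⁻¹) : H →L[ℂ] H) * (↑T : H →L[ℂ] H)) := by
        simp only [mul_assoc]
    _ = star (V : H →L[ℂ] H) * (V : H →L[ℂ] H) := by rw [h1, h2, one_mul, mul_one]


theorem stmt16 (T V : (H →L[ℂ] H)ˣ) (m M : ℝ) (hm : 0 < m) (hmM : m < M)
    (hTV : ∀ x : H, m * ‖(T : H →L[ℂ] H) x‖ ≤ ‖(V : H →L[ℂ] H) x‖ ∧ ‖(V : H →L[ℂ] H) x‖ ≤ M * ‖(T : H →L[ℂ] H) x‖)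
    (ν : ℝ) (hν : ν ∈ Set.Ioo (0 : ℝ) 1) :
    qPersp (fun s : ℝ => s ^ ν) V T ≤
      (2 * ((M ^ (2 * (ν + 1)) - m ^ (2 * (ν + 1))) / ((ν + 1) * (M ^ 2 - m ^ 2)))) • modSq T -
        (M ^ 2 - m ^ 2)⁻¹ •
          ((M ^ (2 * ν)) • ((M ^ 2 : ℝ) • modSq T - modSq V) +
            (m ^ (2 * ν)) • (modSq V - (m ^ 2 : ℝ) • modSq T)) := by
  obtain ⟨hν0, hν1⟩ := hν
  have hM0 : 0 < M := lt_trans hm hmM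
  have ha : 0 < m ^ 2 := by positivity
  have hab : m ^ 2 < M ^ 2 := by nlinarith
  have hba' : (M ^ 2 - m ^ 2 : ℝ) ≠ 0 := ne_of_gt (by nlinarith)
  have hν1' : (ν : ℝ) + 1 ≠ 0 := by linarith
  obtain ⟨hlb, hub⟩ := qX_bounds T V m M hTV hm.le hM0.le
  have hXsa := qX_sa V T
  have hspec : spectrum ℝ (qX V T) ⊆ Set.Icc (m ^ 2) (M ^ 2) := fun s hs =>
    ⟨(algebraMap_le_iff_le_spectrum hXsa).mp hlb s hs,
     (le_algebraMap_iff_spectrum_le hXsa).mp hub s hs⟩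
  set α : ℝ := 2 * (((M ^ 2 : ℝ) ^ (ν + 1) - (m ^ 2 : ℝ) ^ (ν + 1)) / ((ν + 1) * (M ^ 2 - m ^ 2)))
      - (M ^ 2 - m ^ 2)⁻¹ * ((M ^ 2 : ℝ) ^ ν * M ^ 2 - (m ^ 2 : ℝ) ^ ν * m ^ 2) with hα
  set β : ℝ := (M ^ 2 - m ^ 2)⁻¹ * ((M ^ 2 : ℝ) ^ ν - (m ^ 2 : ℝ) ^ ν) with hβ
  have hptwise : ∀ s ∈ spectrum ℝ (qX V T), s ^ ν ≤ α + β * s := by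
    intro s hs
    have h := key_scalar ha hab hν0 hν1 (hspec hs).1 (hspec hs).2
    have heq : 2 * (((M ^ 2 : ℝ) ^ (ν + 1) - (m ^ 2 : ℝ) ^ (ν + 1)) / ((ν + 1) * (M ^ 2 - m ^ 2))) -
        (M ^ 2 - m ^ 2)⁻¹ * ((M ^ 2 : ℝ) ^ ν * (M ^ 2 - s) + (m ^ 2 : ℝ) ^ ν * (s - m ^ 2))
        = α + β * s := by
      rw [hα, hβ]
      field_simp
      ring
    linarith [heq ▸ h]
  have hcfc : cfc (fun s : ℝ => s ^ ν) (qX V T) ≤ cfc (fun s : ℝ => α + β * s) (qX V T) :=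
    cfc_mono hptwise
      (fun s _ => (Real.continuousAt_rpow_const s ν (Or.inr hν0.le)).continuousWithinAt)
      (by fun_prop)
  have haffine : cfc (fun s : ℝ => α + β * s) (qX V T)
      = algebraMap ℝ (H →L[ℂ] H) α + β • qX V T := by
    rw [cfc_add (a := qX V T) (fun _ : ℝ => α) (fun s : ℝ => β * s) (by fun_prop) (by fun_prop),
      cfc_const α (qX V T) hXsa, cfc_const_mul_id β (qX V T) hXsa]
  have hconj := star_left_conjugate_le_conjugate hcfc ((T : H →L[ℂ] H))
  rw [haffine] at hconj
  have hexp : star (T : H →L[ℂ] H) * (algebraMap ℝ (H →L[ℂ] H) α + β • qX V T)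
      * (T : H →L[ℂ] H) = α • modSq T + β • modSq V := by
    rw [Algebra.algebraMap_eq_smul_one, mul_add, add_mul, mul_smul_comm, smul_mul_assoc,
      mul_one, mul_smul_comm, smul_mul_assoc, conj_qX]
    rfl
  rw [hexp] at hconj
  have e1 : M ^ (2 * (ν + 1)) = (M ^ 2 : ℝ) ^ (ν + 1) := by
    rw [Real.rpow_mul hM0.le, show ((2 : ℝ)) = ((2 : ℕ) : ℝ) by norm_num, Real.rpow_natCast]
  have e2 : m ^ (2 * (ν + 1)) = (m ^ 2 : ℝ) ^ (ν + 1) := by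
    rw [Real.rpow_mul hm.le, show ((2 : ℝ)) = ((2 : ℕ) : ℝ) by norm_num, Real.rpow_natCast]
  have e3 : M ^ (2 * ν) = (M ^ 2 : ℝ) ^ ν := by
    rw [Real.rpow_mul hM0.le, show ((2 : ℝ)) = ((2 : ℕ) : ℝ) by norm_num, Real.rpow_natCast]
  have e4 : m ^ (2 * ν) = (m ^ 2 : ℝ) ^ ν := by
    rw [Real.rpow_mul hm.le, show ((2 : ℝ)) = ((2 : ℕ) : ℝ) by norm_num, Real.rpow_natCast]
  rw [e1, e2, e3, e4]
  refine le_trans (show qPersp (fun s : ℝ => s ^ ν) V T ≤ α • modSq T + β • modSq V from hconj) ?_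
  refine le_of_eq ?_
  rw [hα, hβ]
  match_scalars
  · field_simp
    ring
  · field_simp
    ring
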